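/- Let G[X,Y] be a bipartite multigraph on finite disjoint vertex sets X and Y, and let g, f assign a natural number to each vertex with g(x) ≤ f(x) for all x ∈ X. Suppose that for every A ⊆ X and every B ⊆ Y one has ∑_{y∈B} f(y) ≥ ∑_{x∈A} max{0, g(x) − e_G(x, Y∖B)}. Then G has a spanning subgraph F such that g(x) ≤ deg_F(x) ≤ f(x) for every x ∈ X and deg_F(y) ≤ f(y) for every y ∈ Y. -/
import Mathlib

private lemma lmod_aux {Y : Type*} [Fintype Y] [DecidableEq Y]
    (e : Y → ℕ) (g : ℕ) (B₁ B₂ : Finset Y) :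
    (g - ∑ y ∈ B₁ᶜ, e y) + (g - ∑ y ∈ B₂ᶜ, e y)
      ≤ (g - ∑ y ∈ (B₁ ∪ B₂)ᶜ, e y) + (g - ∑ y ∈ (B₁ ∩ B₂)ᶜ, e y) := by
  rw [Finset.compl_union, Finset.compl_inter]
  have hm : (∑ y ∈ B₁ᶜ ∪ B₂ᶜ, e y) + ∑ y ∈ B₁ᶜ ∩ B₂ᶜ, e y
      = (∑ y ∈ B₁ᶜ, e y) + ∑ y ∈ B₂ᶜ, e y := Finset.sum_union_inter
  have h1 : (∑ y ∈ B₁ᶜ ∩ B₂ᶜ, e y) ≤ ∑ y ∈ B₁ᶜ, e y :=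
    Finset.sum_le_sum_of_subset Finset.inter_subset_left
  have h2 : (∑ y ∈ B₁ᶜ ∩ B₂ᶜ, e y) ≤ ∑ y ∈ B₂ᶜ, e y :=
    Finset.sum_le_sum_of_subset Finset.inter_subset_right
  omega

private lemma lmod_aux' {Y : Type*} [Fintype Y] [DecidableEq Y]
    (e : Y → ℕ) (g : ℕ) (B₁ B₂ : Finset Y)
    (h₁d : g ≤ ∑ y ∈ B₁ᶜ, e y) (h₂d : g ≤ ∑ y ∈ B₂ᶜ, e y)
    (hno : ¬ g ≤ ∑ y ∈ (B₁ ∪ B₂)ᶜ, e y) :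
    (g - ∑ y ∈ B₁ᶜ, e y) + (g - ∑ y ∈ B₂ᶜ, e y)
      < (g - ∑ y ∈ (B₁ ∪ B₂)ᶜ, e y) + (g - ∑ y ∈ (B₁ ∩ B₂)ᶜ, e y) := by
  omega

private lemma tight_union {X : Type*} {Y : Type*} [Fintype X] [Fintype Y] [DecidableEq Y]
    (eG : X → Y → ℕ) (g f : X ⊕ Y → ℕ) (x₀ : X)
    (hLR : ∀ B : Finset Y,
      (∑ x : X, (g (Sum.inl x) - ∑ y ∈ Bᶜ, eG x y)) ≤ ∑ y ∈ B, f (Sum.inr y))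
    {B₁ B₂ : Finset Y}
    (h₁ : (∑ x : X, (g (Sum.inl x) - ∑ y ∈ B₁ᶜ, eG x y)) = ∑ y ∈ B₁, f (Sum.inr y))
    (h₁d : g (Sum.inl x₀) ≤ ∑ y ∈ B₁ᶜ, eG x₀ y)
    (h₂ : (∑ x : X, (g (Sum.inl x) - ∑ y ∈ B₂ᶜ, eG x y)) = ∑ y ∈ B₂, f (Sum.inr y))
    (h₂d : g (Sum.inl x₀) ≤ ∑ y ∈ B₂ᶜ, eG x₀ y) :
    (∑ x : X, (g (Sum.inl x) - ∑ y ∈ (B₁ ∪ B₂)ᶜ, eG x y)) = (∑ y ∈ B₁ ∪ B₂, f (Sum.inr y)) ∧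
      g (Sum.inl x₀) ≤ ∑ y ∈ (B₁ ∪ B₂)ᶜ, eG x₀ y := by
  have hsupmod : (∑ x : X, (g (Sum.inl x) - ∑ y ∈ B₁ᶜ, eG x y)) +
      (∑ x : X, (g (Sum.inl x) - ∑ y ∈ B₂ᶜ, eG x y)) ≤
      (∑ x : X, (g (Sum.inl x) - ∑ y ∈ (B₁ ∪ B₂)ᶜ, eG x y)) +
      (∑ x : X, (g (Sum.inl x) - ∑ y ∈ (B₁ ∩ B₂)ᶜ, eG x y)) := by
    rw [← Finset.sum_add_distrib, ← Finset.sum_add_distrib]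
    exact Finset.sum_le_sum fun x _ => lmod_aux (eG x) _ B₁ B₂
  have hRmod : (∑ y ∈ B₁ ∪ B₂, f (Sum.inr y)) + (∑ y ∈ B₁ ∩ B₂, f (Sum.inr y))
      = (∑ y ∈ B₁, f (Sum.inr y)) + ∑ y ∈ B₂, f (Sum.inr y) := Finset.sum_union_inter
  have hu := hLR (B₁ ∪ B₂)
  have hi := hLR (B₁ ∩ B₂)
  refine ⟨by omega, ?_⟩
  by_contra hno
  have hstrict : (∑ x : X, ((g (Sum.inl x) - ∑ y ∈ B₁ᶜ, eG x y) + (g (Sum.inl x) - ∑ y ∈ B₂ᶜ, eG x y)))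
      < ∑ x : X, ((g (Sum.inl x) - ∑ y ∈ (B₁ ∪ B₂)ᶜ, eG x y) + (g (Sum.inl x) - ∑ y ∈ (B₁ ∩ B₂)ᶜ, eG x y)) :=
    Finset.sum_lt_sum (fun x _ => lmod_aux (eG x) _ B₁ B₂)
      ⟨x₀, Finset.mem_univ _, lmod_aux' (eG x₀) _ B₁ B₂ h₁d h₂d hno⟩
  rw [Finset.sum_add_distrib, Finset.sum_add_distrib] at hstrict
  omega

/-- Sufficiency direction: if for all `A ⊆ X`, `B ⊆ Y` we have
`∑_{y∈B} f(y) ≥ ∑_{x∈A} max{0, g(x) − e_G(x, Y∖B)}`, then the bipartite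
multigraph `G[X,Y]` (given by `eG`) has a spanning subgraph `F` with
`g(x) ≤ deg_F(x) ≤ f(x)` for `x ∈ X` and `deg_F(y) ≤ f(y)` for `y ∈ Y`. -/
theorem bipartite_gf_factor_sufficiency
    {X Y : Type*} [Fintype X] [Fintype Y] [DecidableEq X] [DecidableEq Y]
    (eG : X → Y → ℕ) (g f : X ⊕ Y → ℕ)
    (hgf : ∀ x : X, g (Sum.inl x) ≤ f (Sum.inl x))
    (hcond : ∀ (A : Finset X) (B : Finset Y),
      ∑ x ∈ A, (g (Sum.inl x) - ∑ y ∈ Bᶜ, eG x y) ≤ ∑ y ∈ B, f (Sum.inr y)) :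
    ∃ eF : X → Y → ℕ,
      (∀ x y, eF x y ≤ eG x y) ∧
      (∀ x : X, g (Sum.inl x) ≤ ∑ y, eF x y ∧ ∑ y, eF x y ≤ f (Sum.inl x)) ∧
      (∀ y : Y, ∑ x, eF x y ≤ f (Sum.inr y)) := by
  classical
  suffices H : ∀ (n : ℕ) (eG : X → Y → ℕ) (g f : X ⊕ Y → ℕ),
      (∀ x : X, g (Sum.inl x) ≤ f (Sum.inl x)) →
      (∀ (A : Finset X) (B : Finset Y),
        ∑ x ∈ A, (g (Sum.inl x) - ∑ y ∈ Bᶜ, eG x y) ≤ ∑ y ∈ B, f (Sum.inr y)) →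
      (∑ x : X, g (Sum.inl x)) ≤ n →
      ∃ eF : X → Y → ℕ,
        (∀ x y, eF x y ≤ eG x y) ∧
        (∀ x : X, g (Sum.inl x) ≤ ∑ y, eF x y ∧ ∑ y, eF x y ≤ f (Sum.inl x)) ∧
        (∀ y : Y, ∑ x, eF x y ≤ f (Sum.inr y)) by
    exact H _ eG g f hgf hcond le_rfl
  intro n
  induction n with
  | zero =>
    intro eG g f hgf hcond hsum
    refine ⟨fun _ _ => 0, fun _ _ => Nat.zero_le _, fun x => ⟨?_, by simp⟩, fun y => by simp⟩
    have hx : g (Sum.inl x) = 0 :=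
      Finset.sum_eq_zero_iff.mp (Nat.le_zero.mp hsum) x (Finset.mem_univ x)
    simp [hx]
  | succ n ih =>
    intro eG g f hgf hcond hsum
    by_cases hle : (∑ x : X, g (Sum.inl x)) ≤ n
    · exact ih eG g f hgf hcond hle
    · -- pick x₀ with positive demand
      have hpos : (∑ x : X, g (Sum.inl x)) ≠ 0 := by omega
      obtain ⟨x₀, -, hx₀⟩ := Finset.exists_ne_zero_of_sum_ne_zero hpos
      have hgx₀ : 1 ≤ g (Sum.inl x₀) := Nat.one_le_iff_ne_zero.mpr hx₀
      have hLR : ∀ B : Finset Y,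
          (∑ x : X, (g (Sum.inl x) - ∑ y ∈ Bᶜ, eG x y)) ≤ ∑ y ∈ B, f (Sum.inr y) :=
        fun B => hcond Finset.univ B
      -- P B : B is tight and "dangerous"
      set P : Finset Y → Prop := fun B =>
        (∑ x : X, (g (Sum.inl x) - ∑ y ∈ Bᶜ, eG x y)) = (∑ y ∈ B, f (Sum.inr y)) ∧
        g (Sum.inl x₀) ≤ ∑ y ∈ Bᶜ, eG x₀ y with hPdef
      have hPunion : ∀ B₁ B₂, P B₁ → P B₂ → P (B₁ ∪ B₂) := by
        intro B₁ B₂ h₁ h₂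
        exact tight_union eG g f x₀ hLR h₁.1 h₁.2 h₂.1 h₂.2
      set Z : Finset Y := Finset.univ.filter (fun y => f (Sum.inr y) = 0) with hZdef
      have hPZ : P Z := by
        have hRZ : (∑ y ∈ Z, f (Sum.inr y)) = 0 :=
          Finset.sum_eq_zero (fun y hy => (Finset.mem_filter.mp hy).2)
        have hLZ := hLR Z
        have hL0 : (∑ x : X, (g (Sum.inl x) - ∑ y ∈ Zᶜ, eG x y)) = 0 := by omega
        refine ⟨by omega, ?_⟩
        have := Finset.sum_eq_zero_iff.mp hL0 x₀ (Finset.mem_univ _)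
        omega
      -- the maximal tight dangerous set
      set Bd : Finset Y := ((Finset.univ.powerset.filter P).sup id) ∪ Z with hBddef
      have hPBd : P Bd := by
        have h0 : P ((⊥ : Finset Y) ∪ Z) := by
          rw [show (⊥ : Finset Y) ∪ Z = Z from Finset.empty_union Z]
          exact hPZ
        have hq : ∀ (B : Finset Y), P (B ∪ Z) → ∀ (B' : Finset Y), P (B' ∪ Z) →
            P ((B ⊔ B') ∪ Z) := by
          intro B hB B' hB'
          have he : (B ⊔ B') ∪ Z = (B ∪ Z) ∪ (B' ∪ Z) := by
            ext z
            simp only [Finset.sup_eq_union, Finset.mem_union]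
            tauto
          rw [he]
          exact hPunion _ _ hB hB'
        have helts : ∀ B ∈ Finset.univ.powerset.filter P, P (id B ∪ Z) := by
          intro B hB
          exact hPunion B Z (Finset.mem_filter.mp hB).2 hPZ
        exact Finset.sup_induction (p := fun s => P (s ∪ Z)) h0 hq helts
      have hsubBd : ∀ B, P B → B ⊆ Bd := by
        intro B hB
        refine Finset.Subset.trans ?_ Finset.subset_union_left
        exact Finset.le_sup (f := id)
          (Finset.mem_filter.mpr ⟨Finset.mem_powerset.mpr (Finset.subset_univ _), hB⟩)
      -- pick y₀
      have hx₀e : g (Sum.inl x₀) ≤ ∑ y ∈ Bdᶜ, eG x₀ y := hPBd.2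
      have hne : (∑ y ∈ Bdᶜ, eG x₀ y) ≠ 0 := by omega
      obtain ⟨y₀, hy₀c, hy₀e⟩ := Finset.exists_ne_zero_of_sum_ne_zero hne
      have hy₀Bd : y₀ ∉ Bd := Finset.mem_compl.mp hy₀c
      have heGxy : 1 ≤ eG x₀ y₀ := Nat.one_le_iff_ne_zero.mpr hy₀e
      have hfy₀ : 1 ≤ f (Sum.inr y₀) := by
        by_contra h
        push_neg at h
        have hz : y₀ ∈ Z := Finset.mem_filter.mpr ⟨Finset.mem_univ _, by omega⟩
        exact hy₀Bd (Finset.subset_union_right hz)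
      have hy₀dang : ∀ B : Finset Y, y₀ ∈ B →
          (∑ x : X, (g (Sum.inl x) - ∑ y ∈ Bᶜ, eG x y)) = (∑ y ∈ B, f (Sum.inr y)) →
          g (Sum.inl x₀) ≤ (∑ y ∈ Bᶜ, eG x₀ y) → False := by
        intro B h1 h2 h3
        exact hy₀Bd (hsubBd B ⟨h2, h3⟩ h1)
      -- reduced problem
      set eG' : X → Y → ℕ := fun x y => if x = x₀ ∧ y = y₀ then eG x y - 1 else eG x y with heG'def
      set g' : X ⊕ Y → ℕ := fun v => if v = Sum.inl x₀ then g v - 1 else g v with hg'def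
      set f' : X ⊕ Y → ℕ :=
        fun v => if v = Sum.inl x₀ ∨ v = Sum.inr y₀ then f v - 1 else f v with hf'def
      have hg'x₀ : g' (Sum.inl x₀) = g (Sum.inl x₀) - 1 := by simp [hg'def]
      have hg'ne : ∀ x : X, x ≠ x₀ → g' (Sum.inl x) = g (Sum.inl x) := by
        intro x hx; simp [hg'def, hx]
      have hf'x₀ : f' (Sum.inl x₀) = f (Sum.inl x₀) - 1 := by simp [hf'def]
      have hf'y₀ : f' (Sum.inr y₀) = f (Sum.inr y₀) - 1 := by simp [hf'def]
      have hf'nex : ∀ x : X, x ≠ x₀ → f' (Sum.inl x) = f (Sum.inl x) := by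
        intro x hx; simp [hf'def, hx]
      have hf'ney : ∀ y : Y, y ≠ y₀ → f' (Sum.inr y) = f (Sum.inr y) := by
        intro y hy; simp [hf'def, hy]
      have heG'ne : ∀ (x : X) (y : Y), ¬(x = x₀ ∧ y = y₀) → eG' x y = eG x y := by
        intro x y h; simp only [heG'def, if_neg h]
      have heG'xy : eG' x₀ y₀ = eG x₀ y₀ - 1 := by simp [heG'def]
      have hgf' : ∀ x : X, g' (Sum.inl x) ≤ f' (Sum.inl x) := by
        intro x
        by_cases hx : x = x₀
        · rw [hx, hg'x₀, hf'x₀]; have := hgf x₀; omega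
        · rw [hg'ne x hx, hf'nex x hx]; exact hgf x
      have hsum' : (∑ x : X, g' (Sum.inl x)) + 1 = ∑ x : X, g (Sum.inl x) := by
        have e1 : (∑ x ∈ Finset.univ.erase x₀, g' (Sum.inl x))
            = ∑ x ∈ Finset.univ.erase x₀, g (Sum.inl x) :=
          Finset.sum_congr rfl fun x hx => hg'ne x (Finset.ne_of_mem_erase hx)
        have e2 : (∑ x ∈ Finset.univ.erase x₀, g' (Sum.inl x)) + g' (Sum.inl x₀)
            = ∑ x : X, g' (Sum.inl x) := Finset.sum_erase_add _ _ (Finset.mem_univ _)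
        have e3 : (∑ x ∈ Finset.univ.erase x₀, g (Sum.inl x)) + g (Sum.inl x₀)
            = ∑ x : X, g (Sum.inl x) := Finset.sum_erase_add _ _ (Finset.mem_univ _)
        omega
      have hcond' : ∀ (A : Finset X) (B : Finset Y),
          (∑ x ∈ A, (g' (Sum.inl x) - ∑ y ∈ Bᶜ, eG' x y)) ≤ ∑ y ∈ B, f' (Sum.inr y) := by
        intro A B
        by_cases hyB : y₀ ∈ B
        · -- y₀ ∈ B
          have heB : ∀ x, (∑ y ∈ Bᶜ, eG' x y) = ∑ y ∈ Bᶜ, eG x y := by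
            intro x
            refine Finset.sum_congr rfl fun y hy => ?_
            have hyne : y ≠ y₀ := fun h => (Finset.mem_compl.mp hy) (h ▸ hyB)
            exact heG'ne x y (by tauto)
          have hRB : (∑ y ∈ B, f' (Sum.inr y)) + 1 = ∑ y ∈ B, f (Sum.inr y) := by
            have e1 : (∑ y ∈ B.erase y₀, f' (Sum.inr y)) = ∑ y ∈ B.erase y₀, f (Sum.inr y) :=
              Finset.sum_congr rfl fun y hy => hf'ney y (Finset.ne_of_mem_erase hy)
            have e2 : (∑ y ∈ B.erase y₀, f' (Sum.inr y)) + f' (Sum.inr y₀)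
                = ∑ y ∈ B, f' (Sum.inr y) := Finset.sum_erase_add _ _ hyB
            have e3 : (∑ y ∈ B.erase y₀, f (Sum.inr y)) + f (Sum.inr y₀)
                = ∑ y ∈ B, f (Sum.inr y) := Finset.sum_erase_add _ _ hyB
            omega
          have hLHS : (∑ x ∈ A, (g' (Sum.inl x) - ∑ y ∈ Bᶜ, eG' x y))
              ≤ (∑ x ∈ A.erase x₀, (g (Sum.inl x) - ∑ y ∈ Bᶜ, eG x y)) +
                ((g (Sum.inl x₀) - 1) - ∑ y ∈ Bᶜ, eG x₀ y) := by
            by_cases hxA : x₀ ∈ A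
            · have h2 : (∑ x ∈ A.erase x₀, (g' (Sum.inl x) - ∑ y ∈ Bᶜ, eG' x y)) +
                  (g' (Sum.inl x₀) - ∑ y ∈ Bᶜ, eG' x₀ y)
                  = ∑ x ∈ A, (g' (Sum.inl x) - ∑ y ∈ Bᶜ, eG' x y) :=
                Finset.sum_erase_add _ _ hxA
              have h1 : (∑ x ∈ A.erase x₀, (g' (Sum.inl x) - ∑ y ∈ Bᶜ, eG' x y))
                  = ∑ x ∈ A.erase x₀, (g (Sum.inl x) - ∑ y ∈ Bᶜ, eG x y) :=
                Finset.sum_congr rfl fun x hx => by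
                  rw [heB, hg'ne x (Finset.ne_of_mem_erase hx)]
              have h3 : g' (Sum.inl x₀) - ∑ y ∈ Bᶜ, eG' x₀ y
                  = (g (Sum.inl x₀) - 1) - ∑ y ∈ Bᶜ, eG x₀ y := by
                rw [heB, hg'x₀]
              omega
            · have h1 : (∑ x ∈ A, (g' (Sum.inl x) - ∑ y ∈ Bᶜ, eG' x y))
                  = ∑ x ∈ A, (g (Sum.inl x) - ∑ y ∈ Bᶜ, eG x y) :=
                Finset.sum_congr rfl fun x hx => by
                  rw [heB, hg'ne x (fun h => hxA (h ▸ hx))]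
              have hAe : A.erase x₀ = A := Finset.erase_eq_of_notMem hxA
              rw [h1, hAe]
              exact Nat.le_add_right _ _
          have hsub2 : (∑ x ∈ A.erase x₀, (g (Sum.inl x) - ∑ y ∈ Bᶜ, eG x y))
              ≤ ∑ x ∈ Finset.univ.erase x₀, (g (Sum.inl x) - ∑ y ∈ Bᶜ, eG x y) :=
            Finset.sum_le_sum_of_subset (Finset.erase_subset_erase _ (Finset.subset_univ A))
          have hUsplit : (∑ x ∈ Finset.univ.erase x₀, (g (Sum.inl x) - ∑ y ∈ Bᶜ, eG x y)) +
              (g (Sum.inl x₀) - ∑ y ∈ Bᶜ, eG x₀ y)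
              = ∑ x : X, (g (Sum.inl x) - ∑ y ∈ Bᶜ, eG x y) :=
            Finset.sum_erase_add _ _ (Finset.mem_univ x₀)
          have hB1 := hLR B
          by_cases hdang : g (Sum.inl x₀) ≤ ∑ y ∈ Bᶜ, eG x₀ y
          · -- B cannot be tight
            have hBnot : (∑ x : X, (g (Sum.inl x) - ∑ y ∈ Bᶜ, eG x y)) ≠ ∑ y ∈ B, f (Sum.inr y) :=
              fun ht => hy₀dang B hyB ht hdang
            omega
          · push_neg at hdang
            omega
        · -- y₀ ∉ B
          have hf'B : ∀ y ∈ B, f' (Sum.inr y) = f (Sum.inr y) := by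
            intro y hy
            exact hf'ney y (fun h => hyB (h ▸ hy))
          rw [Finset.sum_congr rfl hf'B]
          refine le_trans (Finset.sum_le_sum ?_) (hcond A B)
          intro x hx
          by_cases hxx : x = x₀
          · have hy₀c' : y₀ ∈ Bᶜ := Finset.mem_compl.mpr hyB
            have e1 : (∑ y ∈ Bᶜ.erase y₀, eG' x₀ y) = ∑ y ∈ Bᶜ.erase y₀, eG x₀ y :=
              Finset.sum_congr rfl fun y hy => heG'ne x₀ y (by
                have := Finset.ne_of_mem_erase hy; tauto)
            have e2 : (∑ y ∈ Bᶜ.erase y₀, eG' x₀ y) + eG' x₀ y₀ = ∑ y ∈ Bᶜ, eG' x₀ y :=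
              Finset.sum_erase_add _ _ hy₀c'
            have e3 : (∑ y ∈ Bᶜ.erase y₀, eG x₀ y) + eG x₀ y₀ = ∑ y ∈ Bᶜ, eG x₀ y :=
              Finset.sum_erase_add _ _ hy₀c'
            rw [hxx, hg'x₀]
            omega
          · rw [hg'ne x hxx]
            refine le_of_eq ?_
            congr 1
            exact Finset.sum_congr rfl fun y _ => heG'ne x y (by tauto)
      have hsum'' : (∑ x : X, g' (Sum.inl x)) ≤ n := by omega
      obtain ⟨eF', hF1, hF2, hF3⟩ := ih eG' g' f' hgf' hcond' hsum''
      refine ⟨fun x y => eF' x y + (if x = x₀ ∧ y = y₀ then 1 else 0), ?_, ?_, ?_⟩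
      · intro x y
        show eF' x y + (if x = x₀ ∧ y = y₀ then 1 else 0) ≤ eG x y
        have h1 := hF1 x y
        by_cases h : x = x₀ ∧ y = y₀
        · rw [if_pos h]
          rw [h.1, h.2] at h1 ⊢
          rw [heG'xy] at h1
          omega
        · rw [if_neg h]
          rw [heG'ne x y h] at h1
          omega
      · intro x
        show g (Sum.inl x) ≤ (∑ y, (eF' x y + if x = x₀ ∧ y = y₀ then 1 else 0)) ∧
          (∑ y, (eF' x y + if x = x₀ ∧ y = y₀ then 1 else 0)) ≤ f (Sum.inl x)
        have hrow : (∑ y, (eF' x y + if x = x₀ ∧ y = y₀ then 1 else 0))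
            = (∑ y, eF' x y) + (if x = x₀ then 1 else 0) := by
          rw [Finset.sum_add_distrib]
          congr 1
          by_cases hx : x = x₀
          · simp [hx]
          · simp [hx]
        rw [hrow]
        have h2 := hF2 x
        by_cases hx : x = x₀
        · rw [hx] at h2 ⊢
          rw [hg'x₀, hf'x₀] at h2
          have h1 := hgf x₀
          rw [if_pos rfl]
          omega
        · rw [hg'ne x hx, hf'nex x hx] at h2
          rw [if_neg hx]
          omega
      · intro y
        show (∑ x, (eF' x y + if x = x₀ ∧ y = y₀ then 1 else 0)) ≤ f (Sum.inr y)
        have hcol : (∑ x, (eF' x y + if x = x₀ ∧ y = y₀ then 1 else 0))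
            = (∑ x, eF' x y) + (if y = y₀ then 1 else 0) := by
          rw [Finset.sum_add_distrib]
          congr 1
          by_cases hy : y = y₀
          · simp [hy]
          · simp [hy]
        rw [hcol]
        have h3 := hF3 y
        by_cases hy : y = y₀
        · rw [hy] at h3 ⊢
          rw [hf'y₀] at h3
          rw [if_pos rfl]
          omega
        · rw [hf'ney y hy] at h3
          rw [if_neg hy]
          omega
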